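/- Consequently, in any feasible single-day schedule with uniform minimum visit length m and |R| rooms, the number of chairs that contain an ongoing infusion during slot h is at most ⌊(h−1)/m⌋·|R| for every slot h; in particular no chair is used during slots 1,…,m. -/
import Mathlib


open Finset

/-- Combining the visit-throughput bound with the visit-before-infusion precedence:
with minimum visit length `m` and `R` rooms, the number of chairs containing an ongoing
infusion during slot `h` is at most `⌊(h-1)/m⌋·R`; in particular no chair is used
during slots `1, …, m`. -/
theorem stmt_18 {Q S : Type*} [Fintype Q] [Fintype S] [DecidableEq S]
    (R m H : ℕ) (hm : 0 < m)
    (a v : Q → ℕ) (ha : ∀ p, 1 ≤ a p) (hv : ∀ p, m ≤ v p)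
    (hrooms : ∀ h : ℕ,
      (univ.filter (fun p : Q => a p ≤ h ∧ h < a p + v p)).card ≤ R)
    (c : Q → S) (i f : Q → ℕ)
    (hprec : ∀ p, a p + v p ≤ i p)
    (hchair : ∀ (h : ℕ) (s : S),
      (univ.filter (fun p : Q => c p = s ∧ i p ≤ h ∧ h < i p + f p)).card ≤ 1) :
    ∀ h : ℕ,
      (univ.filter (fun s : S => ∃ p, c p = s ∧ i p ≤ h ∧ h < i p + f p)).card
        ≤ ((h - 1) / m) * R ∧
      (h ≤ m →
        (univ.filter (fun s : S => ∃ p, c p = s ∧ i p ≤ h ∧ h < i p + f p)).card = 0) := by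
  classical
  intro h
  set K := (h - 1) / m with hK
  have main :
      (univ.filter (fun s : S => ∃ p, c p = s ∧ i p ≤ h ∧ h < i p + f p)).card ≤ K * R := by
    set P : Finset Q := univ.filter (fun p => a p + v p ≤ h) with hP
    -- chairs set ⊆ image of c on P
    have hsub : (univ.filter (fun s : S => ∃ p, c p = s ∧ i p ≤ h ∧ h < i p + f p))
        ⊆ P.image c := by
      intro s hs
      simp only [mem_filter, mem_univ, true_and] at hs
      obtain ⟨p, hcp, hip, _⟩ := hs
      refine Finset.mem_image.2 ⟨p, ?_, hcp⟩
      simp only [hP, mem_filter, mem_univ, true_and]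
      exact le_trans (hprec p) hip
    have h1 : (univ.filter (fun s : S => ∃ p, c p = s ∧ i p ≤ h ∧ h < i p + f p)).card
        ≤ P.card := le_trans (Finset.card_le_card hsub) (Finset.card_image_le)
    -- P ⊆ biUnion over j ∈ Icc 1 K of ongoing visits at slot j*m
    have h2 : P ⊆ (Finset.Icc 1 K).biUnion
        (fun j => univ.filter (fun p : Q => a p ≤ j * m ∧ j * m < a p + v p)) := by
      intro p hp
      simp only [hP, mem_filter, mem_univ, true_and] at hp
      set j := (a p - 1) / m + 1 with hj
      have hje : j * m = ((a p - 1) / m) * m + m := by ring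
      have hub : j * m ≤ a p - 1 + m := by
        rw [hje]
        exact Nat.add_le_add_right (Nat.div_mul_le_self _ _) m
      have hlb : a p ≤ j * m := by
        have hdm := Nat.div_add_mod' (a p - 1) m
        have hmod := Nat.mod_lt (a p - 1) hm
        omega
      have hjm_le : j * m ≤ h - 1 := by
        have h1a := ha p
        have h2a := hv p
        omega
      refine Finset.mem_biUnion.2 ⟨j, ?_, ?_⟩
      · refine Finset.mem_Icc.2 ⟨Nat.le_add_left 1 _, ?_⟩
        rw [hK, Nat.le_div_iff_mul_le hm]
        exact hjm_le
      · simp only [mem_filter, mem_univ, true_and]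
        have h2a := hv p
        have h1a := ha p
        constructor
        · exact hlb
        · omega
    have h3 : P.card ≤ K * R := by
      calc P.card ≤ ∑ j ∈ Finset.Icc 1 K,
            (univ.filter (fun p : Q => a p ≤ j * m ∧ j * m < a p + v p)).card :=
          le_trans (Finset.card_le_card h2) (Finset.card_biUnion_le)
        _ ≤ ∑ _j ∈ Finset.Icc 1 K, R := Finset.sum_le_sum fun j _ => hrooms (j * m)
        _ = K * R := by simp [Nat.Icc_eq_range', mul_comm]
    exact le_trans h1 h3
  refine ⟨main, fun hhm => ?_⟩
  have hK0 : K = 0 := by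
    rw [hK]
    exact Nat.div_eq_of_lt (by omega)
  simp only [hK0, zero_mul, Nat.le_zero] at main
  exact main
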